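/- The generalized discrete q-Hermite II polynomials satisfy the three-term recursion ((1-q^{n+1+θ_n(2α+1)})/(1-q^{n+1})) · h̃_{n+1,α}(x,y|q) = x·h̃_{n,α}(x,y|q) - y·q^{-2n+1}(1-q^n)·h̃_{n-1,α}(x,y|q) for n ≥ 1. -/

import Mathlib

open Finset

noncomputable def qPochGen (Q a : ℝ) (n : ℕ) : ℝ := ∏ j ∈ Finset.range n, (1 - a * Q ^ j)

noncomputable def qPoch (q : ℝ) (n : ℕ) : ℝ := qPochGen q q n

noncomputable def gqPochRec (q α : ℝ) : ℕ → ℝ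
  | 0 => 1
  | n + 1 =>
      (1 - Real.rpow q ((n : ℝ) + 1 + (if Even n then 1 else 0) * (2 * α + 1))) *
        gqPochRec q α n

noncomputable def hTilde (q α x y : ℝ) (n : ℕ) : ℝ :=
  qPoch q n * ∑ k ∈ Finset.range (n / 2 + 1),
    (-1 : ℝ) ^ k * q ^ (-2 * (n : ℤ) * (k : ℤ) + (k : ℤ) * (2 * (k : ℤ) + 1)) *
      x ^ (n - 2 * k) * y ^ k / (gqPochRec q α (n - 2 * k) * qPoch (q ^ 2) k)

lemma qPoch_succ (q : ℝ) (n : ℕ) : qPoch q (n + 1) = qPoch q n * (1 - q ^ (n + 1)) := by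
  simp only [qPoch, qPochGen, Finset.prod_range_succ]
  ring

lemma qPoch_pos {q : ℝ} (hq0 : 0 ≤ q) (hq1 : q < 1) (n : ℕ) : 0 < qPoch q n := by
  unfold qPoch qPochGen
  apply Finset.prod_pos
  intro j _
  have h : q * q ^ j = q ^ (j + 1) := by ring
  have h2 : q ^ (j + 1) < 1 := pow_lt_one₀ hq0 hq1 (Nat.succ_ne_zero j)
  rw [h]; linarith

lemma gq_pos {q α : ℝ} (hq : 0 < q) (hq1 : q < 1) (hα : -1 < α) :
    ∀ m, 0 < gqPochRec q α m
  | 0 => one_pos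
  | (m + 1) => by
    rw [gqPochRec]
    apply mul_pos _ (gq_pos hq hq1 hα m)
    have hm : (0:ℝ) ≤ (m:ℝ) := Nat.cast_nonneg m
    have hpos : (0:ℝ) < (m : ℝ) + 1 + (if Even m then (1:ℝ) else 0) * (2 * α + 1) := by
      split_ifs with h
      · linarith
      · linarith
    have h1 : Real.rpow q ((m : ℝ) + 1 + (if Even m then (1:ℝ) else 0) * (2 * α + 1)) < 1 :=
      Real.rpow_lt_one hq.le hq1 hpos
    linarith

lemma gq_step (q α : ℝ) (a : ℕ) :
    gqPochRec q α (a + 1) =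
      (1 - q ^ ((a : ℝ) + 1 + (if Even a then (1:ℝ) else 0) * (2 * α + 1))) *
        gqPochRec q α a := rfl

lemma rpow_hpow (q a : ℝ) : Real.rpow q a = q ^ a := rfl

set_option maxHeartbeats 1000000 in
theorem hTilde_three_term_recursion (q α x y : ℝ) (hq : 0 < q) (hq1 : q < 1)
    (hα : -1 < α) (n : ℕ) (hn : 1 ≤ n) :
    (1 - Real.rpow q ((n : ℝ) + 1 + (if Even n then 1 else 0) * (2 * α + 1))) /
        (1 - q ^ (n + 1)) * hTilde q α x y (n + 1) =
      x * hTilde q α x y n -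
        y * q ^ (-2 * (n : ℤ) + 1) * (1 - q ^ n) * hTilde q α x y (n - 1) := by
  have hq0 : q ≠ 0 := hq.ne'
  have hg : ∀ a, 0 < gqPochRec q α a := gq_pos hq hq1 hα
  have hP2 : ∀ k, 0 < qPoch (q ^ 2) k := qPoch_pos (by positivity) (by nlinarith)
  obtain ⟨m, rfl⟩ : ∃ m, n = m + 1 := ⟨n - 1, by omega⟩
  simp only [Nat.add_sub_cancel, rpow_hpow]
  set θ : ℝ := (if Even (m + 1) then (1:ℝ) else 0) * (2 * α + 1) with hθ
  set T : ℕ → ℝ := fun k =>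
    (-1:ℝ) ^ k * q ^ (-2 * ((m:ℤ) + 1) * (k:ℤ) + 2 * (k:ℤ) ^ 2 - (k:ℤ)) *
      x ^ (m + 1 + 1 - 2 * k) * y ^ k /
      (gqPochRec q α (m + 1 + 1 - 2 * k) * qPoch (q ^ 2) k) with hT
  -- Step A : left-hand side
  have hQ1 : (0:ℝ) < 1 - q ^ (m + 1 + 1) := by
    have := pow_lt_one₀ hq.le hq1 (show m + 1 + 1 ≠ 0 by omega); linarith
  have hTsum : hTilde q α x y (m + 1 + 1) =
      qPoch q (m + 1) * (1 - q ^ (m + 1 + 1)) *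
        ∑ k ∈ Finset.range ((m + 1 + 1) / 2 + 1), T k := by
    rw [hTilde, qPoch_succ]
    congr 1
    apply Finset.sum_congr rfl
    intro k hk
    simp only [hT]
    have harg : (-2 * ((m + 1 + 1 : ℕ) : ℤ) * (k:ℤ) + (k:ℤ) * (2 * (k:ℤ) + 1)) =
        (-2 * ((m:ℤ) + 1) * (k:ℤ) + 2 * (k:ℤ) ^ 2 - (k:ℤ)) := by push_cast; ring
    rw [harg]
  have hA : (1 - q ^ ((((m + 1 : ℕ) : ℝ)) + 1 + θ)) / (1 - q ^ (m + 1 + 1)) *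
        hTilde q α x y (m + 1 + 1) =
      qPoch q (m + 1) * ∑ k ∈ Finset.range ((m + 1 + 1) / 2 + 1),
        (1 - q ^ ((((m + 1 : ℕ) : ℝ)) + 1 + θ)) * T k := by
    rw [hTsum, ← Finset.mul_sum]
    field_simp
  -- Step B : x * hTilde n
  have hB : x * hTilde q α x y (m + 1) =
      qPoch q (m + 1) * ∑ k ∈ Finset.range ((m + 1 + 1) / 2 + 1),
        q ^ (2 * k) * (1 - q ^ ((((m + 1 + 1 - 2 * k : ℕ) : ℝ)) + θ)) * T k := by
    have key : ∀ k ∈ Finset.range ((m + 1) / 2 + 1),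
        x * ((-1:ℝ) ^ k * q ^ (-2 * ((m + 1 : ℕ) : ℤ) * (k:ℤ) + (k:ℤ) * (2 * (k:ℤ) + 1)) *
          x ^ (m + 1 - 2 * k) * y ^ k /
          (gqPochRec q α (m + 1 - 2 * k) * qPoch (q ^ 2) k)) =
        q ^ (2 * k) * (1 - q ^ ((((m + 1 + 1 - 2 * k : ℕ) : ℝ)) + θ)) * T k := by
      intro k hk
      rw [Finset.mem_range] at hk
      have h2k : 2 * k ≤ m + 1 := by omega
      have e1 : m + 1 + 1 - 2 * k = (m + 1 - 2 * k) + 1 := by omega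
      have hev : (if Even (m + 1 - 2 * k) then (1:ℝ) else 0) =
          (if Even (m + 1) then (1:ℝ) else 0) := by
        congr 1
        simp [Nat.even_sub h2k]
      have hgc : gqPochRec q α (m + 1 + 1 - 2 * k) =
          (1 - q ^ ((((m + 1 + 1 - 2 * k : ℕ) : ℝ)) + θ)) *
            gqPochRec q α (m + 1 - 2 * k) := by
        conv_lhs => rw [e1, gq_step]
        congr 3
        rw [hθ, ← hev, e1]
        push_cast
        ring
      have hc0 : (1 - q ^ ((((m + 1 + 1 - 2 * k : ℕ) : ℝ)) + θ)) ≠ 0 := by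
        intro hcon
        have h1 := hg (m + 1 + 1 - 2 * k)
        rw [hgc, hcon, zero_mul] at h1
        exact lt_irrefl _ h1
      have hqe : q ^ (-2 * ((m + 1 : ℕ) : ℤ) * (k:ℤ) + (k:ℤ) * (2 * (k:ℤ) + 1)) =
          q ^ (2 * k) * q ^ (-2 * ((m:ℤ) + 1) * (k:ℤ) + 2 * (k:ℤ) ^ 2 - (k:ℤ)) := by
        rw [← zpow_natCast q (2 * k), ← zpow_add₀ hq0]
        congr 1
        push_cast
        ring
      have hx : x ^ (m + 1 + 1 - 2 * k) = x ^ (m + 1 - 2 * k) * x := by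
        rw [e1, pow_succ]
      set c : ℝ := 1 - q ^ ((((m + 1 + 1 - 2 * k : ℕ) : ℝ)) + θ) with hc
      simp only [hT]
      rw [hgc, hqe, hx]
      have hG : gqPochRec q α (m + 1 - 2 * k) ≠ 0 := (hg _).ne'
      have hP : qPoch (q ^ 2) k ≠ 0 := (hP2 k).ne'
      field_simp
    rw [hTilde, mul_left_comm, Finset.mul_sum]
    congr 1
    rcases Nat.even_or_odd m with he | ho
    · -- m even : extra vanishing term
      obtain ⟨a, ha⟩ := id he
      have hr : (m + 1 + 1) / 2 + 1 = ((m + 1) / 2 + 1) + 1 := by omega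
      conv_rhs => rw [hr, Finset.sum_range_succ]
      have hz : q ^ (2 * ((m + 1) / 2 + 1)) *
          (1 - q ^ ((((m + 1 + 1 - 2 * ((m + 1) / 2 + 1) : ℕ) : ℝ)) + θ)) *
            T ((m + 1) / 2 + 1) = 0 := by
        have h0 : m + 1 + 1 - 2 * ((m + 1) / 2 + 1) = 0 := by omega
        have hθ0 : θ = 0 := by
          rw [hθ, if_neg (by simp [Nat.even_add_one, he])]
          ring
        simp [h0, hθ0]
      rw [hz, add_zero]
      exact Finset.sum_congr rfl key
    · obtain ⟨a, ha⟩ := ho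
      have hr : (m + 1 + 1) / 2 = (m + 1) / 2 := by omega
      rw [hr]
      exact Finset.sum_congr rfl key
  -- Step C : y * ... * hTilde (n-1)
  have hC : y * q ^ (-2 * ((m + 1 : ℕ) : ℤ) + 1) * (1 - q ^ (m + 1)) * hTilde q α x y m =
      qPoch q (m + 1) * ∑ k ∈ Finset.range ((m + 1 + 1) / 2 + 1), (q ^ (2 * k) - 1) * T k := by
    have hr : (m + 1 + 1) / 2 + 1 = (m / 2 + 1) + 1 := by omega
    rw [hr, Finset.sum_range_succ']
    have hz : (q ^ (2 * 0) - 1) * T 0 = 0 := by norm_num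
    rw [hz, add_zero]
    have key2 : ∀ k' ∈ Finset.range (m / 2 + 1),
        y * q ^ (-2 * ((m + 1 : ℕ) : ℤ) + 1) *
          ((-1:ℝ) ^ k' * q ^ (-2 * ((m : ℕ) : ℤ) * (k':ℤ) + (k':ℤ) * (2 * (k':ℤ) + 1)) *
            x ^ (m - 2 * k') * y ^ k' /
            (gqPochRec q α (m - 2 * k') * qPoch (q ^ 2) k')) =
        (q ^ (2 * (k' + 1)) - 1) * T (k' + 1) := by
      intro k' hk'
      rw [Finset.mem_range] at hk'
      have h2k : 2 * k' ≤ m := by omega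
      have e2 : m + 1 + 1 - 2 * (k' + 1) = m - 2 * k' := by omega
      have hP2s : qPoch (q ^ 2) (k' + 1) = qPoch (q ^ 2) k' * (1 - q ^ (2 * (k' + 1))) := by
        rw [qPoch_succ]
        congr 2
        rw [← pow_mul]
      have hne : (1:ℝ) - q ^ (2 * (k' + 1)) ≠ 0 := by
        have := pow_lt_one₀ hq.le hq1 (show 2 * (k' + 1) ≠ 0 by omega); intro h; linarith
      have hqe2 : q ^ (-2 * ((m:ℤ) + 1) * ((k' + 1 : ℕ) : ℤ) + 2 * ((k' + 1 : ℕ) : ℤ) ^ 2 -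
            ((k' + 1 : ℕ) : ℤ)) =
          q ^ (-2 * ((m + 1 : ℕ) : ℤ) + 1) *
            q ^ (-2 * ((m : ℕ) : ℤ) * (k':ℤ) + (k':ℤ) * (2 * (k':ℤ) + 1)) := by
        rw [← zpow_add₀ hq0]
        congr 1
        push_cast
        ring
      have hG : gqPochRec q α (m - 2 * k') ≠ 0 := (hg _).ne'
      have hP : qPoch (q ^ 2) k' ≠ 0 := (hP2 k').ne'
      simp only [hT]
      rw [e2, hP2s, hqe2]
      field_simp
      ring
    rw [hTilde]
    have hPm : qPoch q (m + 1) = qPoch q m * (1 - q ^ (m + 1)) := qPoch_succ q m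
    calc y * q ^ (-2 * ((m + 1 : ℕ) : ℤ) + 1) * (1 - q ^ (m + 1)) *
          (qPoch q m * ∑ k' ∈ Finset.range (m / 2 + 1),
            (-1:ℝ) ^ k' * q ^ (-2 * ((m : ℕ) : ℤ) * (k':ℤ) + (k':ℤ) * (2 * (k':ℤ) + 1)) *
              x ^ (m - 2 * k') * y ^ k' /
              (gqPochRec q α (m - 2 * k') * qPoch (q ^ 2) k'))
        = (qPoch q m * (1 - q ^ (m + 1))) *
            ((y * q ^ (-2 * ((m + 1 : ℕ) : ℤ) + 1)) *
              ∑ k' ∈ Finset.range (m / 2 + 1),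
                (-1:ℝ) ^ k' * q ^ (-2 * ((m : ℕ) : ℤ) * (k':ℤ) + (k':ℤ) * (2 * (k':ℤ) + 1)) *
                  x ^ (m - 2 * k') * y ^ k' /
                  (gqPochRec q α (m - 2 * k') * qPoch (q ^ 2) k')) := by ring
      _ = (qPoch q m * (1 - q ^ (m + 1))) *
            ∑ k' ∈ Finset.range (m / 2 + 1),
              (y * q ^ (-2 * ((m + 1 : ℕ) : ℤ) + 1)) *
                ((-1:ℝ) ^ k' * q ^ (-2 * ((m : ℕ) : ℤ) * (k':ℤ) + (k':ℤ) * (2 * (k':ℤ) + 1)) *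
                  x ^ (m - 2 * k') * y ^ k' /
                  (gqPochRec q α (m - 2 * k') * qPoch (q ^ 2) k')) := by
          rw [Finset.mul_sum]
      _ = (qPoch q m * (1 - q ^ (m + 1))) *
            ∑ k' ∈ Finset.range (m / 2 + 1), (q ^ (2 * (k' + 1)) - 1) * T (k' + 1) := by
          congr 1
          refine Finset.sum_congr rfl fun k' hk' => ?_
          rw [← key2 k' hk']
      _ = qPoch q (m + 1) * ∑ k' ∈ Finset.range (m / 2 + 1),
            (q ^ (2 * (k' + 1)) - 1) * T (k' + 1) := by rw [hPm]
  rw [hA, hB, hC, ← mul_sub, ← Finset.sum_sub_distrib]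
  congr 1
  apply Finset.sum_congr rfl
  intro k hk
  rw [Finset.mem_range] at hk
  have h2k : 2 * k ≤ m + 1 + 1 := by omega
  have h1 : (q:ℝ) ^ (2 * k) = q ^ ((((2 * k : ℕ)) : ℝ)) := (Real.rpow_natCast q (2 * k)).symm
  have h2 : q ^ ((((m + 1 + 1 - 2 * k : ℕ) : ℝ)) + θ) * q ^ ((((2 * k : ℕ)) : ℝ)) =
      q ^ ((((m + 1 : ℕ) : ℝ)) + 1 + θ) := by
    rw [← Real.rpow_add hq]
    congr 1
    rw [Nat.cast_sub h2k]
    push_cast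
    ring
  have key3 : (1 - q ^ ((((m + 1 : ℕ) : ℝ)) + 1 + θ)) =
      q ^ (2 * k) * (1 - q ^ ((((m + 1 + 1 - 2 * k : ℕ) : ℝ)) + θ)) - (q ^ (2 * k) - 1) := by
    rw [h1]
    linear_combination h2
  linear_combination (T k) * key3
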